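/- With the same setup, f(x̄) = 0 if and only if there exist A ⊆ S⁻ of size (k+1)/2 and B ⊆ S⁺ of size at most (k−1)/2 such that dₙ(x̄, ā) < dₙ(x̄, c̄) for every ā ∈ A and c̄ ∈ S⁺ \ B. -/

import Mathlib

/-- Selection lemma: for any finite set `S`, weight `g`, preferred set `P`, and `j ≤ |S|`,
one can pick `j` elements of minimal weight, preferring elements of `P` on ties. -/
lemma optimistic_knn_select {α : Type*} [DecidableEq α] (g : α → ℝ) (P : Finset α) :
    ∀ (j : ℕ) (S : Finset α), j ≤ S.card →
      ∃ T ⊆ S, T.card = j ∧ (∀ y ∈ T, ∀ z ∈ S \ T, g y ≤ g z) ∧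
        (∀ y ∈ T, y ∉ P → ∀ z ∈ (S ∩ P) \ T, g y < g z) := by
  intro j
  induction j with
  | zero =>
      intro S _
      exact ⟨∅, Finset.empty_subset _, rfl, by simp, by simp⟩
  | succ j ih =>
      intro S hj
      obtain ⟨T, hTS, hTcard, hmin, htie⟩ := ih S (Nat.le_of_succ_le hj)
      have hne : (S \ T).Nonempty := by
        rw [← Finset.card_pos, Finset.card_sdiff_of_subset hTS]
        omega
      obtain ⟨z₀, hz₀mem, hz₀min⟩ := Finset.exists_min_image (S \ T) g hne
      by_cases hP : ∃ w ∈ (S \ T) ∩ P, ∀ v ∈ S \ T, g w ≤ g v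
      · obtain ⟨w, hwmem, hwmin⟩ := hP
        rw [Finset.mem_inter] at hwmem
        obtain ⟨hwST, hwP⟩ := hwmem
        rw [Finset.mem_sdiff] at hwST
        refine ⟨insert w T, ?_, ?_, ?_, ?_⟩
        · exact Finset.insert_subset hwST.1 hTS
        · rw [Finset.card_insert_of_notMem hwST.2, hTcard]
        · intro y hy z hz
          have hz' : z ∈ S \ T := by
            rw [Finset.mem_sdiff] at hz ⊢
            exact ⟨hz.1, fun h => hz.2 (Finset.mem_insert_of_mem h)⟩
          rcases Finset.mem_insert.mp hy with rfl | hy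
          · exact hwmin z hz'
          · exact hmin y hy z hz'
        · intro y hy hyP z hz
          have hz' : z ∈ (S ∩ P) \ T := by
            rw [Finset.mem_sdiff] at hz ⊢
            exact ⟨hz.1, fun h => hz.2 (Finset.mem_insert_of_mem h)⟩
          rcases Finset.mem_insert.mp hy with rfl | hy
          · exact absurd hwP hyP
          · exact htie y hy hyP z hz'
      · refine ⟨insert z₀ T, ?_, ?_, ?_, ?_⟩
        · exact Finset.insert_subset (Finset.mem_sdiff.mp hz₀mem).1 hTS
        · rw [Finset.card_insert_of_notMem (Finset.mem_sdiff.mp hz₀mem).2, hTcard]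
        · intro y hy z hz
          have hz' : z ∈ S \ T := by
            rw [Finset.mem_sdiff] at hz ⊢
            exact ⟨hz.1, fun h => hz.2 (Finset.mem_insert_of_mem h)⟩
          rcases Finset.mem_insert.mp hy with rfl | hy
          · exact hz₀min z hz'
          · exact hmin y hy z hz'
        · intro y hy hyP z hz
          have hzSP := (Finset.mem_sdiff.mp hz).1
          rw [Finset.mem_inter] at hzSP
          have hz' : z ∈ S \ T := by
            rw [Finset.mem_sdiff]
            exact ⟨hzSP.1, fun h => (Finset.mem_sdiff.mp hz).2 (Finset.mem_insert_of_mem h)⟩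
          rcases Finset.mem_insert.mp hy with rfl | hy
          · -- y = z₀, z ∈ P with g z ≥ g z₀; if equal, z would be a preferred minimizer
            rcases lt_or_eq_of_le (hz₀min z hz') with h | h
            · exact h
            · exfalso
              apply hP
              refine ⟨z, Finset.mem_inter.mpr ⟨hz', hzSP.2⟩, ?_⟩
              intro v hv
              rw [← h]
              exact hz₀min v hv
          · have hz'' : z ∈ (S ∩ P) \ T := by
              rw [Finset.mem_sdiff]
              exact ⟨Finset.mem_inter.mpr ⟨hzSP.1, hzSP.2⟩, (Finset.mem_sdiff.mp hz').2⟩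
            exact htie y hy hyP z hz''

/-- Proposition 1(b): characterization of the optimistic k-NN classifier's negative value. -/
theorem optimistic_knn_neg_characterization
    {M : Type*} {n : ℕ} [DecidableEq (Fin n → M)]
    (d : (Fin n → M) → (Fin n → M) → ℝ)
    (hd_nonneg : ∀ a b, 0 ≤ d a b)
    (hd_symm : ∀ a b, d a b = d b a)
    (hd_triangle : ∀ a b c, d a c ≤ d a b + d b c)
    (hd_eq : ∀ a b, d a b = 0 ↔ a = b)
    (k : ℕ) (hk_odd : Odd k) (hk_pos : 1 ≤ k)
    (Sp Sm : Finset (Fin n → M)) (hdisj : Disjoint Sp Sm)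
    (hcard : k ≤ (Sp ∪ Sm).card)
    (x : Fin n → M) :
    (¬ ∃ T ⊆ Sp ∪ Sm, T.card = k ∧ k < 2 * (T ∩ Sp).card ∧
      ∀ y ∈ T, ∀ z ∈ (Sp ∪ Sm) \ T, d x y ≤ d x z) ↔
    (∃ A ⊆ Sm, A.card = (k + 1) / 2 ∧ ∃ B ⊆ Sp, B.card ≤ (k - 1) / 2 ∧
      ∀ a ∈ A, ∀ c ∈ Sp \ B, d x a < d x c) := by
  obtain ⟨r, hr⟩ := hk_odd
  have hkp1 : (k + 1) / 2 = r + 1 := by omega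
  have hkm1 : (k - 1) / 2 = r := by omega
  constructor
  · -- forward: no good T exists ⟹ A, B exist
    intro hno
    obtain ⟨T, hTS, hTcard, hmin, htie⟩ :=
      optimistic_knn_select (g := d x) (P := Sp) k (Sp ∪ Sm) hcard
    -- split T into positive and negative parts
    have hsplit : (T ∩ Sp).card + (T ∩ Sm).card = k := by
      have hdisj' : Disjoint (T ∩ Sp) (T ∩ Sm) :=
        Finset.disjoint_of_subset_left Finset.inter_subset_right
          (Finset.disjoint_of_subset_right Finset.inter_subset_right hdisj)
      rw [← Finset.card_union_of_disjoint hdisj', ← Finset.inter_union_distrib_left,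
        Finset.inter_eq_left.mpr hTS, hTcard]
    have hnomaj : ¬ (k < 2 * (T ∩ Sp).card) := by
      intro hmaj
      exact hno ⟨T, hTS, hTcard, hmaj, fun y hy z hz => hmin y hy z hz⟩
    have hSm : r + 1 ≤ (T ∩ Sm).card := by omega
    obtain ⟨A, hAsub, hAcard⟩ := Finset.exists_subset_card_eq hSm
    refine ⟨A, fun a ha => (Finset.mem_inter.mp (hAsub ha)).2, by rw [hAcard, hkp1],
      T ∩ Sp, Finset.inter_subset_right, by rw [hkm1]; omega, ?_⟩
    intro a ha c hc
    rw [Finset.mem_sdiff] at hc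
    have haT : a ∈ T := (Finset.mem_inter.mp (hAsub ha)).1
    have haSm : a ∈ Sm := (Finset.mem_inter.mp (hAsub ha)).2
    have haP : a ∉ Sp := fun h => (Finset.disjoint_left.mp hdisj h) haSm
    have hcT : c ∉ T := fun h => hc.2 (Finset.mem_inter.mpr ⟨h, hc.1⟩)
    exact htie a haT haP c (Finset.mem_sdiff.mpr
      ⟨Finset.mem_inter.mpr ⟨Finset.mem_union_left _ hc.1, hc.1⟩, hcT⟩)
  · -- backward: A, B exist ⟹ no good T
    rintro ⟨A, hAsub, hAcard, B, hBsub, hBcard, hstrict⟩ ⟨T, hTS, hTcard, hmaj, hnear⟩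
    rw [hkp1] at hAcard
    rw [hkm1] at hBcard
    have hTSp : r + 1 ≤ (T ∩ Sp).card := by omega
    -- find c ∈ T ∩ Sp with c ∉ B
    have hne : ((T ∩ Sp) \ B).Nonempty := by
      by_contra h
      rw [Finset.not_nonempty_iff_eq_empty, Finset.sdiff_eq_empty_iff_subset] at h
      have := Finset.card_le_card h
      omega
    obtain ⟨c, hc⟩ := hne
    rw [Finset.mem_sdiff, Finset.mem_inter] at hc
    obtain ⟨⟨hcT, hcSp⟩, hcB⟩ := hc
    -- every a ∈ A is in T
    have hAT : A ⊆ T := by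
      intro a ha
      by_contra haT
      have haS : a ∈ (Sp ∪ Sm) \ T :=
        Finset.mem_sdiff.mpr ⟨Finset.mem_union_right _ (hAsub ha), haT⟩
      have h1 := hnear c hcT a haS
      have h2 := hstrict a ha c (Finset.mem_sdiff.mpr ⟨hcSp, hcB⟩)
      linarith
    -- so T contains r+1 negatives and r+1 positives: too many
    have hATm : A ⊆ T ∩ Sm := fun a ha => Finset.mem_inter.mpr ⟨hAT ha, hAsub ha⟩
    have hSm : r + 1 ≤ (T ∩ Sm).card := hAcard ▸ Finset.card_le_card hATm
    have hsplit : (T ∩ Sp).card + (T ∩ Sm).card = k := by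
      have hdisj' : Disjoint (T ∩ Sp) (T ∩ Sm) :=
        Finset.disjoint_of_subset_left Finset.inter_subset_right
          (Finset.disjoint_of_subset_right Finset.inter_subset_right hdisj)
      rw [← Finset.card_union_of_disjoint hdisj', ← Finset.inter_union_distrib_left,
        Finset.inter_eq_left.mpr hTS, hTcard]
    omega
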